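/- A pure state γ = vv* ∈ M_k ⊗ M_m is completely reducible if and only if it is separable, i.e., v = a ⊗ b is a product vector. In particular, writing v = (R ⊗ Id)u_m for R ∈ M_{k×m}, the map F_γ ∘ G_γ(X) = (RR*)X(RR*) fails the complete reducibility criterion whenever rank(R) > 1: there is an orthogonal projection V_1 = r_1 r_1* with F_γ∘G_γ(V_1 M_k V_1) ⊆ V_1 M_k V_1 but F_γ∘G_γ(r_1 r_2*) ≠ 0 for a suitable unit vector r_2 orthogonal to r_1. -/

import Mathlib

open Matrix ComplexOrder Kronecker

def CompletelyReducible {a b : Type*} [Fintype a] [Fintype b] [DecidableEq a] [DecidableEq b]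
    (γ : Matrix (a × b) (a × b) ℂ) : Prop :=
  ∀ (W : Matrix a a ℂ) (V : Matrix b b ℂ),
    W.IsHermitian → W * W = W → V.IsHermitian → V * V = V →
    (γ * (W ⊗ₖ (1 - V))).trace = 0 → (γ * ((1 - W) ⊗ₖ V)).trace = 0 →
    γ = (W ⊗ₖ V) * γ * (W ⊗ₖ V) + ((1 - W) ⊗ₖ (1 - V)) * γ * ((1 - W) ⊗ₖ (1 - V))

namespace Stmt19Aux
set_option linter.unusedSectionVars false

variable {n p q : Type*} [Fintype n] [Fintype p] [Fintype q]
  [DecidableEq n] [DecidableEq p] [DecidableEq q]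

lemma vecMulVec_mulVec' (a : n → ℂ) (b c : p → ℂ) :
    vecMulVec a b *ᵥ c = (b ⬝ᵥ c) • a := by
  funext i
  simp only [Matrix.mulVec, dotProduct, vecMulVec_apply, Pi.smul_apply, smul_eq_mul,
    Finset.sum_mul]
  exact Finset.sum_congr rfl fun j _ => by ring

lemma mul_vecMulVec' (M : Matrix q n ℂ) (a : n → ℂ) (b : p → ℂ) :
    M * vecMulVec a b = vecMulVec (M *ᵥ a) b := by
  ext i j
  simp only [mul_apply, vecMulVec_apply, Matrix.mulVec, dotProduct, Finset.sum_mul]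
  exact Finset.sum_congr rfl fun l _ => by ring

lemma vecMulVec_mul' (a : n → ℂ) (b : p → ℂ) (M : Matrix p q ℂ) :
    vecMulVec a b * M = vecMulVec a (b ᵥ* M) := by
  ext i j
  simp only [mul_apply, vecMulVec_apply, Matrix.vecMul, dotProduct, Finset.mul_sum]
  exact Finset.sum_congr rfl fun l _ => by ring

lemma vecMulVec_mul_vecMulVec (a : n → ℂ) (b c : p → ℂ) (d : q → ℂ) :
    vecMulVec a b * vecMulVec c d = (b ⬝ᵥ c) • vecMulVec a d := by
  ext i j
  simp only [mul_apply, vecMulVec_apply, dotProduct, Matrix.smul_apply, smul_eq_mul, Finset.sum_mul]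
  exact Finset.sum_congr rfl fun l _ => by ring

lemma trace_vvstar (v w : n → ℂ) (M : Matrix n n ℂ) :
    (vecMulVec v w * M).trace = w ⬝ᵥ (M *ᵥ v) := by
  simp only [trace, diag, mul_apply, vecMulVec_apply, dotProduct, Matrix.mulVec,
    Finset.mul_sum]
  conv_lhs => rw [Finset.sum_comm]
  exact Finset.sum_congr rfl fun j _ => Finset.sum_congr rfl fun i _ => by ring

lemma proj_mulVec_eq_zero {P : Matrix n n ℂ} (hP : P.IsHermitian) (hP2 : P * P = P)
    {v : n → ℂ} (h : star v ⬝ᵥ (P *ᵥ v) = 0) : P *ᵥ v = 0 := by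
  apply dotProduct_star_self_eq_zero.mp
  rw [star_mulVec, hP.eq, dotProduct_mulVec, vecMul_vecMul, hP2, ← dotProduct_mulVec, h]

lemma kron_mulVec (A : Matrix n n ℂ) (B : Matrix p p ℂ) (v : n × p → ℂ) :
    (A ⊗ₖ B) *ᵥ v = fun x => (A * (Matrix.of fun i j => v (i, j)) * Bᵀ) x.1 x.2 := by
  funext x
  simp only [Matrix.mulVec, dotProduct, kroneckerMap_apply, mul_apply, of_apply,
    transpose_apply, Fintype.sum_prod_type, Finset.sum_mul, Finset.mul_sum]
  conv_lhs => rw [Finset.sum_comm]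
  exact Finset.sum_congr rfl fun j _ => Finset.sum_congr rfl fun i _ => by ring

lemma kron_mulVec_prod (A : Matrix n n ℂ) (B : Matrix p p ℂ) (a : n → ℂ) (b : p → ℂ) :
    (A ⊗ₖ B) *ᵥ (fun x => a x.1 * b x.2) = fun x => (A *ᵥ a) x.1 * (B *ᵥ b) x.2 := by
  funext x
  simp only [Matrix.mulVec, dotProduct, kroneckerMap_apply, Fintype.sum_prod_type,
    Finset.sum_mul, Finset.mul_sum]
  conv_lhs => rw [Finset.sum_comm]
  exact Finset.sum_congr rfl fun j _ => Finset.sum_congr rfl fun i _ => by ring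

lemma kron_conjTranspose (A : Matrix n n ℂ) (B : Matrix p p ℂ) :
    (A ⊗ₖ B)ᴴ = Aᴴ ⊗ₖ Bᴴ := by
  ext ⟨i, j⟩ ⟨i', j'⟩
  simp [conjTranspose_apply, kroneckerMap_apply]

lemma kron_isHermitian {A : Matrix n n ℂ} {B : Matrix p p ℂ}
    (hA : A.IsHermitian) (hB : B.IsHermitian) : (A ⊗ₖ B).IsHermitian := by
  unfold IsHermitian
  rw [kron_conjTranspose, hA.eq, hB.eq]

lemma sub_one_idem {V : Matrix n n ℂ} (hV2 : V * V = V) : (1 - V) * (1 - V) = 1 - V := by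
  rw [sub_mul, one_mul, mul_sub, mul_one, hV2, sub_self, sub_zero]

lemma mul_sub_one_self {V : Matrix n n ℂ} (hV2 : V * V = V) : V * (1 - V) = 0 := by
  rw [mul_sub, mul_one, hV2, sub_self]

lemma four_sum (W : Matrix n n ℂ) (V : Matrix p p ℂ) :
    W ⊗ₖ V + W ⊗ₖ (1 - V) + ((1 - W) ⊗ₖ V + (1 - W) ⊗ₖ (1 - V)) = 1 := by
  rw [← kronecker_add, ← kronecker_add, ← add_kronecker]
  have h1 : V + (1 - V) = 1 := by abel
  have h2 : W + (1 - W) = 1 := by abel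
  rw [h1, h2, one_kronecker_one]

lemma herm_conj_vvstar {P : Matrix n n ℂ} (hP : P.IsHermitian) (v : n → ℂ) :
    P * vecMulVec v (star v) * P = vecMulVec (P *ᵥ v) (star (P *ᵥ v)) := by
  rw [mul_vecMulVec', vecMulVec_mul', star_mulVec, hP.eq]

lemma vecMulVec_add_left (a b : n → ℂ) (c : p → ℂ) :
    vecMulVec (a + b) c = vecMulVec a c + vecMulVec b c := by
  ext i j; simp [vecMulVec_apply, add_mul]

lemma vecMulVec_add_right (a : n → ℂ) (b c : p → ℂ) :
    vecMulVec a (b + c) = vecMulVec a b + vecMulVec a c := by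
  ext i j; simp [vecMulVec_apply, mul_add]

lemma vecMulVec_smul_left (r : ℂ) (a : n → ℂ) (c : p → ℂ) :
    vecMulVec (r • a) c = r • vecMulVec a c := by
  ext i j; simp [vecMulVec_apply]; ring

lemma vecMulVec_zero_left (c : p → ℂ) : vecMulVec (0 : n → ℂ) c = 0 := by
  ext i j; simp [vecMulVec_apply]

lemma vecMulVec_star_isHermitian (x : n → ℂ) : (vecMulVec x (star x)).IsHermitian := by
  unfold IsHermitian
  ext i j
  simp [conjTranspose_apply, vecMulVec_apply, mul_comm]

lemma prod_fun_eq_zero {c : n → ℂ} {d : p → ℂ}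
    (h : ∀ i j, c i * d j = 0) : c = 0 ∨ d = 0 := by
  by_cases hc : c = 0
  · exact Or.inl hc
  · right
    obtain ⟨i, hi⟩ := Function.ne_iff.mp hc
    funext j
    rcases mul_eq_zero.mp (h i j) with h' | h'
    · exact absurd h' hi
    · exact h'

end Stmt19Aux

open Stmt19Aux in
/-- A pure state `γ = v v^* ∈ M_k ⊗ M_m` is completely reducible if and only
if it is separable, i.e. `v = a ⊗ b` is a product vector. -/
theorem stmt19 (k m : ℕ) (v : Fin k × Fin m → ℂ) :
    CompletelyReducible (vecMulVec v (star v)) ↔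
      ∃ (a : Fin k → ℂ) (b : Fin m → ℂ), v = fun p => a p.1 * b p.2 := by
  constructor
  · intro hCR
    by_contra hnp
    push_neg at hnp
    set R : Matrix (Fin k) (Fin m) ℂ := Matrix.of fun i j => v (i, j) with hRdef
    have hR0 : R ≠ 0 := by
      intro h
      apply hnp (fun _ => 0) (fun _ => 0)
      funext p
      have h2 : R p.1 p.2 = 0 := by rw [h]; rfl
      simpa [hRdef] using h2
    have hA : (R * Rᴴ).IsHermitian := isHermitian_mul_conjTranspose_self R
    have hA0 : R * Rᴴ ≠ 0 := by simpa using hR0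
    obtain ⟨i, hi⟩ : ∃ i, hA.eigenvalues i ≠ 0 := by
      by_contra h
      push_neg at h
      apply hA0
      have hz : (RCLike.ofReal ∘ hA.eigenvalues : Fin k → ℂ) = 0 :=
        funext fun i => by simp [h i]
      rw [hA.spectral_theorem, hz, show (0 : Fin k → ℂ) = fun _ => 0 from rfl,
        diagonal_zero, map_zero]
    set x : Fin k → ℂ := ⇑(hA.eigenvectorBasis i) with hxdef
    set μ : ℝ := hA.eigenvalues i with hμdef
    have hAx : (R * Rᴴ) *ᵥ x = (μ : ℂ) • x := by
      have h := hA.mulVec_eigenvectorBasis i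
      funext j
      have h2 := congrFun h j
      simpa [Complex.real_smul] using h2
    have hxx : star x ⬝ᵥ x = 1 := by
      have h1 : (inner ℂ (hA.eigenvectorBasis i) (hA.eigenvectorBasis i) : ℂ) = 1 := by
        rw [inner_self_eq_norm_sq_to_K]
        simp [hA.eigenvectorBasis.orthonormal.1 i]
      rw [EuclideanSpace.inner_eq_star_dotProduct] at h1
      rw [dotProduct_comm]
      exact h1
    set y : Fin m → ℂ := Rᴴ *ᵥ x with hydef
    have hyy : star y ⬝ᵥ y = (μ : ℂ) := by
      rw [hydef, star_mulVec, conjTranspose_conjTranspose, dotProduct_mulVec, vecMul_vecMul,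
        ← dotProduct_mulVec, hAx]
      simp [hxx]
    have hμc0 : (μ : ℂ) ≠ 0 := Complex.ofReal_ne_zero.mpr hi
    have hy0 : y ≠ 0 := by
      intro h
      rw [h] at hyy
      simp at hyy
      exact hμc0 hyy.symm
    have hx0 : x ≠ 0 := by
      intro h
      rw [h] at hxx
      simp at hxx
    set W : Matrix (Fin k) (Fin k) ℂ := vecMulVec x (star x) with hWdef
    set V : Matrix (Fin m) (Fin m) ℂ := (μ:ℂ)⁻¹ • vecMulVec (star y) y with hVdef
    have hWherm : W.IsHermitian := vecMulVec_star_isHermitian x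
    have hW2 : W * W = W := by
      rw [hWdef, Stmt19Aux.vecMulVec_mul_vecMulVec, hxx, one_smul]
    have hVherm' : (vecMulVec (star y) y).IsHermitian := by
      have h := vecMulVec_star_isHermitian (star y)
      simpa using h
    have hVherm : V.IsHermitian := by
      have : Vᴴ = V := by
        rw [hVdef, conjTranspose_smul, hVherm'.eq]
        congr 1
        simp
      exact this
    have hV2 : V * V = V := by
      rw [hVdef, smul_mul_assoc, mul_smul_comm, Stmt19Aux.vecMulVec_mul_vecMulVec, dotProduct_comm, hyy,
        smul_smul, smul_smul]
      field_simp
    have hWR : W * R = vecMulVec x (star y) := by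
      rw [hWdef, vecMulVec_mul']
      rw [hydef, star_mulVec, conjTranspose_conjTranspose]
    have hRy : R *ᵥ y = (μ:ℂ) • x := by rw [hydef, mulVec_mulVec, hAx]
    have hVT : Vᵀ = (μ:ℂ)⁻¹ • vecMulVec y (star y) := by
      rw [hVdef, transpose_smul]
      congr 1
      ext a b
      simp [vecMulVec_apply, transpose_apply, mul_comm]
    have hWRV : W * R * Vᵀ = vecMulVec x (star y) := by
      rw [hWR, hVT, Matrix.mul_smul, Stmt19Aux.vecMulVec_mul_vecMulVec, hyy, smul_smul,
        inv_mul_cancel₀ hμc0, one_smul]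
    have hT1 : W * R * (1 - V)ᵀ = 0 := by
      rw [transpose_sub, transpose_one, Matrix.mul_sub, Matrix.mul_one, hWRV, hWR, sub_self]
    have hRV : R * Vᵀ = vecMulVec x (star y) := by
      rw [hVT, Matrix.mul_smul, mul_vecMulVec', hRy, vecMulVec_smul_left, smul_smul,
        inv_mul_cancel₀ hμc0, one_smul]
    have hT2 : (1 - W) * R * Vᵀ = 0 := by
      rw [Matrix.sub_mul, Matrix.one_mul, Matrix.sub_mul, hWRV, hRV, sub_self]
    have hkv1 : (W ⊗ₖ (1 - V)) *ᵥ v = 0 := by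
      have h := kron_mulVec W (1 - V) v
      rw [← hRdef, hT1] at h
      rw [h]
      funext p
      simp
    have hkv2 : ((1 - W) ⊗ₖ V) *ᵥ v = 0 := by
      have h := kron_mulVec (1 - W) V v
      rw [← hRdef, hT2] at h
      rw [h]
      funext p
      simp
    have htr1 : (vecMulVec v (star v) * (W ⊗ₖ (1 - V))).trace = 0 := by
      rw [trace_vvstar, hkv1, dotProduct_zero]
    have htr2 : (vecMulVec v (star v) * ((1 - W) ⊗ₖ V)).trace = 0 := by
      rw [trace_vvstar, hkv2, dotProduct_zero]
    have heq := hCR W V hWherm hW2 hVherm hV2 htr1 htr2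
    have hPherm : (W ⊗ₖ V).IsHermitian := kron_isHermitian hWherm hVherm
    have hQherm : ((1 - W) ⊗ₖ (1 - V)).IsHermitian :=
      kron_isHermitian (isHermitian_one.sub hWherm) (isHermitian_one.sub hVherm)
    set s : Fin k × Fin m → ℂ := (W ⊗ₖ V) *ᵥ v with hsdef
    set t : Fin k × Fin m → ℂ := ((1 - W) ⊗ₖ (1 - V)) *ᵥ v with htdef
    have hs : s = fun p => x p.1 * star y p.2 := by
      rw [hsdef, kron_mulVec, ← hRdef, hWRV]
      funext p
      simp [vecMulVec_apply]
    have hvst : v = s + t := by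
      have h4 := four_sum W V
      have h5 : (W ⊗ₖ V + W ⊗ₖ (1 - V) + ((1 - W) ⊗ₖ V + (1 - W) ⊗ₖ (1 - V))) *ᵥ v = v := by
        rw [h4, one_mulVec]
      rw [add_mulVec, add_mulVec, add_mulVec, hkv1, hkv2] at h5
      simp only [add_zero, zero_add] at h5
      exact h5.symm
    have hs0 : s ≠ 0 := by
      obtain ⟨i0, hi0⟩ := Function.ne_iff.mp hx0
      obtain ⟨j0, hj0⟩ := Function.ne_iff.mp hy0
      rw [hs]
      intro h
      have h2 := congrFun h (i0, j0)
      simp at h2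
      rcases h2 with h2 | h2
      · exact hi0 h2
      · exact hj0 h2
    have ht0 : t ≠ 0 := by
      intro h
      apply hnp x (star y)
      rw [hvst, h, add_zero, hs]
    have hst : star s ⬝ᵥ t = 0 := by
      rw [hsdef, htdef, star_mulVec, hPherm.eq, dotProduct_mulVec, vecMul_vecMul]
      have hPQ : (W ⊗ₖ V) * ((1 - W) ⊗ₖ (1 - V)) = 0 := by
        rw [← mul_kronecker_mul, mul_sub_one_self hW2, zero_kronecker]
      rw [hPQ]
      simp
    rw [herm_conj_vvstar hPherm, herm_conj_vvstar hQherm] at heq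
    have hexp : vecMulVec v (star v) =
        vecMulVec s (star s) + (vecMulVec s (star t) + vecMulVec t (star s))
          + vecMulVec t (star t) := by
      rw [hvst, star_add, vecMulVec_add_left, vecMulVec_add_right, vecMulVec_add_right]
      abel
    have hBC : vecMulVec s (star t) + vecMulVec t (star s) = 0 := by
      have h := hexp.symm.trans heq
      calc vecMulVec s (star t) + vecMulVec t (star s)
          = (vecMulVec s (star s) + (vecMulVec s (star t) + vecMulVec t (star s))
              + vecMulVec t (star t)) - vecMulVec s (star s) - vecMulVec t (star t) := by abel
        _ = 0 := by rw [h]; abel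
    have happ := congrArg (fun M => M *ᵥ t) hBC
    simp only [add_mulVec, vecMulVec_mulVec', zero_mulVec] at happ
    rw [hst, zero_smul, add_zero] at happ
    rcases smul_eq_zero.mp happ with h | h
    · exact ht0 (dotProduct_star_self_eq_zero.mp h)
    · exact hs0 h
  · rintro ⟨a, b, rfl⟩
    intro W V hW hW2 hV hV2 h1 h2
    have hP1herm : (W ⊗ₖ (1 - V)).IsHermitian := kron_isHermitian hW (isHermitian_one.sub hV)
    have hP1idem : (W ⊗ₖ (1 - V)) * (W ⊗ₖ (1 - V)) = W ⊗ₖ (1 - V) := by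
      rw [← mul_kronecker_mul, hW2, sub_one_idem hV2]
    have hP2herm : ((1 - W) ⊗ₖ V).IsHermitian := kron_isHermitian (isHermitian_one.sub hW) hV
    have hP2idem : ((1 - W) ⊗ₖ V) * ((1 - W) ⊗ₖ V) = (1 - W) ⊗ₖ V := by
      rw [← mul_kronecker_mul, sub_one_idem hW2, hV2]
    rw [trace_vvstar] at h1 h2
    have hz1 := proj_mulVec_eq_zero hP1herm hP1idem h1
    have hz2 := proj_mulVec_eq_zero hP2herm hP2idem h2
    have hz1b := hz1
    rw [kron_mulVec_prod] at hz1b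
    have hsplit : (W *ᵥ a) = 0 ∨ ((1 - V) *ᵥ b) = 0 := by
      apply prod_fun_eq_zero
      intro i j
      have := congrFun hz1b (i, j)
      simpa using this
    have hsum : (W ⊗ₖ V) *ᵥ (fun p => a p.1 * b p.2)
        + ((1 - W) ⊗ₖ (1 - V)) *ᵥ (fun p => a p.1 * b p.2) = (fun p => a p.1 * b p.2) := by
      have h4 := four_sum W V
      have h5 : (W ⊗ₖ V + W ⊗ₖ (1 - V) + ((1 - W) ⊗ₖ V + (1 - W) ⊗ₖ (1 - V))) *ᵥ
          (fun p => a p.1 * b p.2) = (fun p => a p.1 * b p.2) := by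
        rw [h4, one_mulVec]
      rw [add_mulVec, add_mulVec, add_mulVec, hz1, hz2] at h5
      simpa using h5
    rw [herm_conj_vvstar (kron_isHermitian hW hV),
      herm_conj_vvstar (kron_isHermitian (isHermitian_one.sub hW) (isHermitian_one.sub hV))]
    rcases hsplit with h | h
    · have hPv : (W ⊗ₖ V) *ᵥ (fun p => a p.1 * b p.2) = 0 := by
        rw [kron_mulVec_prod, h]
        funext p
        simp
      have hQv : ((1 - W) ⊗ₖ (1 - V)) *ᵥ (fun p => a p.1 * b p.2)
          = (fun p => a p.1 * b p.2) := by
        rw [hPv, zero_add] at hsum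
        exact hsum
      rw [hPv, hQv, vecMulVec_zero_left, zero_add]
    · have hQv : ((1 - W) ⊗ₖ (1 - V)) *ᵥ (fun p => a p.1 * b p.2) = 0 := by
        rw [kron_mulVec_prod, h]
        funext p
        simp
      have hPv : (W ⊗ₖ V) *ᵥ (fun p => a p.1 * b p.2) = (fun p => a p.1 * b p.2) := by
        rw [hQv, add_zero] at hsum
        exact hsum
      rw [hPv, hQv, vecMulVec_zero_left, add_zero]
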